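/- Let f be a multivariate real polynomial in n variables with total degree d > 0, let p ≥ 1 be a real number, and let c_1, …, c_d ∈ ℝ be such that for every j ∈ {1, …, d} and every x ∈ ℝ^n with Σ_{i=1}^n |x_i|^p = 1 one has f_j(x) ≥ c_j, where c_d > 0. Let q : ℝ → ℝ be the univariate polynomial q(λ) = Σ_{j=1}^d c_j λ^j, and let R ≥ 0 satisfy q(R) = 0 and q(t) = 0 → t ≤ R for all t ≥ 0 (R is the largest nonnegative real root of q). Then: (i) for every x ∈ ℝ^n with (Σ_{i=1}^n |x_i|^p)^{1/p} > R one has f(x) > f(0); (ii) every x' ∈ ℝ^n with f(x') ≤ f(y) for all y ∈ ℝ^n satisfies (Σ_i |x'_i|^p)^{1/p} ≤ R; (iii) every x* ∈ ℤ^n with f(x*) ≤ f(y) for all y ∈ ℤ^n satisfies (Σ_i |x*_i|^p)^{1/p} ≤ R and moreover |x*_i| ≤ ⌊R⌋ for every i. -/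
import Mathlib
open MvPolynomial Finset Filter

lemma aux_eval_smul {n j : ℕ} {φ : MvPolynomial (Fin n) ℝ} (hφ : φ.IsHomogeneous j)
    (t : ℝ) (x : Fin n → ℝ) : eval (t • x) φ = t ^ j * eval x φ := by
  rw [eval_eq, eval_eq, Finset.mul_sum]
  refine Finset.sum_congr rfl fun m hm => ?_
  rw [MvPolynomial.mem_support_iff] at hm
  have hdeg : ∑ i ∈ m.support, m i = j := by
    have h := hφ hm
    simpa [Finsupp.weight_apply, Finsupp.sum] using h
  have hprod : ∏ i ∈ m.support, (t • x) i ^ m i = t ^ j * ∏ i ∈ m.support, x i ^ m i := by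
    simp only [Pi.smul_apply, smul_eq_mul, mul_pow]
    rw [Finset.prod_mul_distrib, Finset.prod_pow_eq_pow_sum, hdeg]
  rw [hprod]; ring

theorem norm_bound_on_minimizers
    {n : ℕ} (f : MvPolynomial (Fin n) ℝ) (d : ℕ)
    (hd : d = f.totalDegree) (hd0 : 0 < d)
    (p : ℝ) (hp : 1 ≤ p) (c : ℕ → ℝ)
    (hc : ∀ j ∈ Finset.Icc 1 d, ∀ x : Fin n → ℝ,
      (∑ i, |x i| ^ p) = 1 → c j ≤ eval x (homogeneousComponent j f))
    (hcd : 0 < c d)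
    (R : ℝ) (hR0 : 0 ≤ R)
    (hRroot : ∑ j ∈ Finset.Icc 1 d, c j * R ^ j = 0)
    (hRmax : ∀ t : ℝ, 0 ≤ t → (∑ j ∈ Finset.Icc 1 d, c j * t ^ j = 0) → t ≤ R) :
    (∀ x : Fin n → ℝ, (∑ i, |x i| ^ p) ^ (1 / p) > R →
      eval (0 : Fin n → ℝ) f < eval x f) ∧
    (∀ x' : Fin n → ℝ, (∀ y : Fin n → ℝ, eval x' f ≤ eval y f) →
      (∑ i, |x' i| ^ p) ^ (1 / p) ≤ R) ∧
    (∀ x' : Fin n → ℤ,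
      (∀ y : Fin n → ℤ,
        eval (fun i => (x' i : ℝ)) f ≤ eval (fun i => (y i : ℝ)) f) →
      (∑ i, |(x' i : ℝ)| ^ p) ^ (1 / p) ≤ R ∧ ∀ i, |x' i| ≤ ⌊R⌋) := by
  have hp0 : 0 < p := lt_of_lt_of_le one_pos hp
  -- positivity of q on (R, ∞)
  have hgpos : ∀ t : ℝ, R < t → 0 < ∑ j ∈ Finset.Icc 1 d, c j * t ^ j := by
    intro t ht
    by_contra hle
    push_neg at hle
    have ht0 : 0 ≤ t := le_trans hR0 ht.le
    have hne : ∑ j ∈ Finset.Icc 1 d, c j * t ^ j ≠ 0 :=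
      fun h => absurd (hRmax t ht0 h) (not_le.mpr ht)
    have hlt : ∑ j ∈ Finset.Icc 1 d, c j * t ^ j < 0 := lt_of_le_of_ne hle hne
    set P : Polynomial ℝ := ∑ j ∈ Finset.Icc 1 d, Polynomial.C (c j) * Polynomial.X ^ j with hP
    have hPeval : ∀ s : ℝ, P.eval s = ∑ j ∈ Finset.Icc 1 d, c j * s ^ j := by
      intro s
      simp [hP, Polynomial.eval_finset_sum]
    have hcoeff : P.coeff d = c d := by
      simp only [hP, Polynomial.finset_sum_coeff, Polynomial.coeff_C_mul,
        Polynomial.coeff_X_pow, mul_ite, mul_one, mul_zero]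
      rw [Finset.sum_ite_eq (Finset.Icc 1 d) d c]
      simp only [Finset.mem_Icc]
      rw [if_pos ⟨hd0, le_refl d⟩]
    have hndle : P.natDegree ≤ d := by
      apply Polynomial.natDegree_sum_le_of_forall_le
      intro j hj
      exact le_trans (Polynomial.natDegree_C_mul_X_pow_le _ _) (Finset.mem_Icc.mp hj).2
    have hnd : P.natDegree = d := by
      refine le_antisymm hndle (Polynomial.le_natDegree_of_ne_zero ?_)
      rw [hcoeff]; exact hcd.ne'
    have hlead : P.leadingCoeff = c d := by rw [Polynomial.leadingCoeff, hnd, hcoeff]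
    have hPne : P ≠ 0 := fun h => by simp [h, Polynomial.leadingCoeff_zero] at hlead; exact hcd.ne' hlead.symm
    have hdegpos : 0 < P.degree := by
      rw [Polynomial.degree_eq_natDegree hPne, hnd]
      exact_mod_cast hd0
    have htend := Polynomial.tendsto_atTop_of_leadingCoeff_nonneg P hdegpos (hlead ▸ hcd.le)
    obtain ⟨M, hM1, hMt⟩ := ((htend.eventually_ge_atTop 1).and (eventually_ge_atTop t)).exists
    have hcont : ContinuousOn (fun s => P.eval s) (Set.Icc t M) :=
      (Polynomial.continuous P).continuousOn
    have hmem : (0 : ℝ) ∈ Set.Icc (P.eval t) (P.eval M) := by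
      constructor
      · rw [hPeval]; exact hlt.le
      · exact le_trans zero_le_one hM1
    obtain ⟨s, hsmem, hseval⟩ := intermediate_value_Icc hMt hcont hmem
    have hsR := hRmax s (le_trans ht0 hsmem.1) (by rw [← hPeval]; exact hseval)
    exact absurd (lt_of_lt_of_le ht (hsmem.1.trans hsR)) (lt_irrefl R)
  -- sum decomposition
  have hsum : ∑ j ∈ Finset.range (d + 1), homogeneousComponent j f = f := by
    rw [hd]; exact sum_homogeneousComponent f
  have hins : Finset.range (d + 1) = insert 0 (Finset.Icc 1 d) := by
    ext j; simp only [Finset.mem_range, Finset.mem_insert, Finset.mem_Icc]; omega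
  have hfeval : ∀ y : Fin n → ℝ,
      eval y f = coeff 0 f + ∑ j ∈ Finset.Icc 1 d, eval y (homogeneousComponent j f) := by
    intro y
    conv_lhs => rw [← hsum]
    rw [map_sum, hins, Finset.sum_insert (by simp), homogeneousComponent_zero, eval_C]
  have heval0 : ∀ j ∈ Finset.Icc 1 d, eval (0 : Fin n → ℝ) (homogeneousComponent j f) = 0 := by
    intro j hj
    have h1 : 1 ≤ j := (Finset.mem_Icc.mp hj).1
    have h := aux_eval_smul (homogeneousComponent_isHomogeneous j f) (0 : ℝ) 0
    rw [smul_zero, zero_pow (by omega), zero_mul] at h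
    exact h
  have h0 : eval (0 : Fin n → ℝ) f = coeff 0 f := by
    rw [hfeval 0, Finset.sum_eq_zero heval0, add_zero]
  -- the key claim (part i)
  have key : ∀ x : Fin n → ℝ, R < (∑ i, |x i| ^ p) ^ (1 / p) →
      eval (0 : Fin n → ℝ) f < eval x f := by
    intro x hx
    set S := ∑ i, |x i| ^ p with hS
    have hS0 : 0 ≤ S := Finset.sum_nonneg fun i _ => Real.rpow_nonneg (abs_nonneg _) p
    set l := S ^ (1 / p) with hl
    have hl0 : 0 < l := lt_of_le_of_lt hR0 hx
    have hSpos : 0 < S := by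
      rcases hS0.lt_or_eq with h | h
      · exact h
      · exfalso
        rw [hl, ← h, Real.zero_rpow (by positivity)] at hl0
        exact lt_irrefl 0 hl0
    have hlp : l ^ p = S := by
      rw [hl, ← Real.rpow_mul hS0, one_div, inv_mul_cancel₀ hp0.ne', Real.rpow_one]
    set u : Fin n → ℝ := l⁻¹ • x with hu
    have hxu : x = l • u := by
      rw [hu, smul_smul, mul_inv_cancel₀ hl0.ne', one_smul]
    have husum : ∑ i, |u i| ^ p = 1 := by
      have hterm : ∀ i, |u i| ^ p = S⁻¹ * |x i| ^ p := by
        intro i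
        rw [hu]
        simp only [Pi.smul_apply, smul_eq_mul, abs_mul]
        rw [Real.mul_rpow (abs_nonneg _) (abs_nonneg _),
          abs_of_pos (inv_pos.mpr hl0), Real.inv_rpow hl0.le, hlp]
      simp_rw [hterm]
      rw [← Finset.mul_sum, ← hS, inv_mul_cancel₀ hSpos.ne']
    have hxval : eval x f
        = coeff 0 f + ∑ j ∈ Finset.Icc 1 d, l ^ j * eval u (homogeneousComponent j f) := by
      rw [hfeval x]
      congr 1
      refine Finset.sum_congr rfl fun j hj => ?_
      conv_lhs => rw [hxu]
      exact aux_eval_smul (homogeneousComponent_isHomogeneous j f) l u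
    have hterm2 : ∀ j ∈ Finset.Icc 1 d,
        c j * l ^ j ≤ l ^ j * eval u (homogeneousComponent j f) := by
      intro j hj
      rw [mul_comm]
      exact mul_le_mul_of_nonneg_left (hc j hj u husum) (pow_nonneg hl0.le j)
    have hsum2 := Finset.sum_le_sum hterm2
    have hpos := hgpos l hx
    rw [hxval, h0]
    linarith
  refine ⟨key, ?_, ?_⟩
  · intro x' hmin
    by_contra hgt
    push_neg at hgt
    exact absurd (hmin 0) (not_le.mpr (key x' hgt))
  · intro x' hmin
    have h2 : eval (fun i => ((x' i : ℤ) : ℝ)) f ≤ eval (0 : Fin n → ℝ) f := by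
      have := hmin 0
      simpa using this
    have h1 : (∑ i, |(x' i : ℝ)| ^ p) ^ (1 / p) ≤ R := by
      by_contra hgt
      push_neg at hgt
      exact absurd h2 (not_le.mpr (key (fun i => (x' i : ℝ)) hgt))
    refine ⟨h1, fun i => ?_⟩
    have h3 : |(x' i : ℝ)| ^ p ≤ ∑ k, |(x' k : ℝ)| ^ p :=
      Finset.single_le_sum (f := fun k => |(x' k : ℝ)| ^ p)
        (fun k _ => Real.rpow_nonneg (abs_nonneg _) p) (Finset.mem_univ i)
    have h4 := Real.rpow_le_rpow (Real.rpow_nonneg (abs_nonneg _) p) h3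
      (le_of_lt (by positivity : (0:ℝ) < 1 / p))
    rw [← Real.rpow_mul (abs_nonneg _), mul_one_div, div_self hp0.ne', Real.rpow_one] at h4
    have ha : |(x' i : ℝ)| ≤ R := h4.trans h1
    rw [← Int.cast_abs] at ha
    exact Int.le_floor.mpr ha
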